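/- Fix p ≥ 2 and consider the cyclic ladder variable gadget G^x on 16p vertices: cycles t_0,...,t_{4p-1} and b_0,...,b_{4p-1} (indices mod 4p) with rungs t_i b_i, plus vertices u_i adjacent to t_{i-1}, t_i, t_{i+1} and vertices d_i adjacent to b_{i-1}, b_i, b_{i+1}, for i = 0,...,4p-1. The fillable non-edges are exactly the diagonals t_i b_{i+1} and t_{i+1} b_i. Then there are exactly two sets F of fillable non-edges such that G^x + F is C4-free: the set of all edges t_i b_{i+1} (i mod 4p), and the set of all edges t_{i+1} b_i (i mod 4p). -/

import Mathlib

/-- The cycle on 4 vertices. -/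
def C4 : SimpleGraph (Fin 4) :=
  SimpleGraph.fromEdgeSet {s(0,1), s(1,2), s(2,3), s(3,0)}

/-- The cyclic ladder variable gadget on `16 p` vertices. Vertices are pairs
`(j, i)` with `i : ZMod (4 p)`, where `(0, i) = tᵢ`, `(1, i) = bᵢ`,
`(2, i) = uᵢ`, `(3, i) = dᵢ`. Edges: the cycles `tᵢ tᵢ₊₁` and `bᵢ bᵢ₊₁`, the
rungs `tᵢ bᵢ`, `uᵢ` adjacent to `tᵢ₋₁, tᵢ, tᵢ₊₁`, and `dᵢ` adjacent to
`bᵢ₋₁, bᵢ, bᵢ₊₁`. -/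
def ladder (p : ℕ) : SimpleGraph (Fin 4 × ZMod (4 * p)) :=
  SimpleGraph.fromRel (fun x y =>
    (x.1 = 0 ∧ y.1 = 0 ∧ y.2 = x.2 + 1) ∨
    (x.1 = 1 ∧ y.1 = 1 ∧ y.2 = x.2 + 1) ∨
    (x.1 = 0 ∧ y.1 = 1 ∧ y.2 = x.2) ∨
    (x.1 = 2 ∧ y.1 = 0 ∧ (y.2 = x.2 - 1 ∨ y.2 = x.2 ∨ y.2 = x.2 + 1)) ∨
    (x.1 = 3 ∧ y.1 = 1 ∧ (y.2 = x.2 - 1 ∨ y.2 = x.2 ∨ y.2 = x.2 + 1)))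

/-- The diagonals `tᵢ bᵢ₊₁`. -/
def diagT (p : ℕ) : Set (Sym2 (Fin 4 × ZMod (4 * p))) :=
  {e | ∃ i : ZMod (4 * p), e = s(((0 : Fin 4), i), ((1 : Fin 4), i + 1))}

/-- The diagonals `tᵢ₊₁ bᵢ`. -/
def diagB (p : ℕ) : Set (Sym2 (Fin 4 × ZMod (4 * p))) :=
  {e | ∃ i : ZMod (4 * p), e = s(((0 : Fin 4), i + 1), ((1 : Fin 4), i))}

open SimpleGraph
def near {n : ℕ} (a b : ZMod n) : Prop := a = b + 1 ∨ b = a ∨ b = a + 1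

lemma zk (p : ℕ) (hp : 2 ≤ p) (k : ℕ) (h1 : 0 < k) (h2 : k < 8) : ((k:ℕ) : ZMod (4*p)) ≠ 0 := by
  haveI : NeZero (4*p) := ⟨by omega⟩
  intro h
  rw [ZMod.natCast_eq_zero_iff] at h
  have := Nat.le_of_dvd h1 h; omega

lemma z1 (p : ℕ) (hp : 2 ≤ p) : (1 : ZMod (4*p)) ≠ 0 := by
  have := zk p hp 1 (by norm_num) (by norm_num); simpa using this
lemma z2 (p : ℕ) (hp : 2 ≤ p) : (2 : ZMod (4*p)) ≠ 0 := by
  have := zk p hp 2 (by norm_num) (by norm_num); simpa using this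
lemma z3 (p : ℕ) (hp : 2 ≤ p) : (3 : ZMod (4*p)) ≠ 0 := by
  have := zk p hp 3 (by norm_num) (by norm_num); simpa using this
lemma z4 (p : ℕ) (hp : 2 ≤ p) : (4 : ZMod (4*p)) ≠ 0 := by
  have := zk p hp 4 (by norm_num) (by norm_num); simpa using this
lemma n12 (p : ℕ) (hp : 2 ≤ p) : (1 : ZMod (4*p)) ≠ 2 := fun h => z1 p hp (by linear_combination -h)
lemma n21 (p : ℕ) (hp : 2 ≤ p) : (2 : ZMod (4*p)) ≠ 1 := fun h => n12 p hp h.symm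
lemma n13 (p : ℕ) (hp : 2 ≤ p) : (1 : ZMod (4*p)) ≠ 3 := fun h => z2 p hp (by linear_combination -h)
lemma n31 (p : ℕ) (hp : 2 ≤ p) : (3 : ZMod (4*p)) ≠ 1 := fun h => n13 p hp h.symm
lemma n14 (p : ℕ) (hp : 2 ≤ p) : (1 : ZMod (4*p)) ≠ 4 := fun h => z3 p hp (by linear_combination -h)
lemma n41 (p : ℕ) (hp : 2 ≤ p) : (4 : ZMod (4*p)) ≠ 1 := fun h => n14 p hp h.symm
lemma n23 (p : ℕ) (hp : 2 ≤ p) : (2 : ZMod (4*p)) ≠ 3 := fun h => z1 p hp (by linear_combination -h)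
lemma n32 (p : ℕ) (hp : 2 ≤ p) : (3 : ZMod (4*p)) ≠ 2 := fun h => n23 p hp h.symm
lemma n24 (p : ℕ) (hp : 2 ≤ p) : (2 : ZMod (4*p)) ≠ 4 := fun h => z2 p hp (by linear_combination -h)
lemma n42 (p : ℕ) (hp : 2 ≤ p) : (4 : ZMod (4*p)) ≠ 2 := fun h => n24 p hp h.symm
lemma n34 (p : ℕ) (hp : 2 ≤ p) : (3 : ZMod (4*p)) ≠ 4 := fun h => z1 p hp (by linear_combination -h)
lemma n43 (p : ℕ) (hp : 2 ≤ p) : (4 : ZMod (4*p)) ≠ 3 := fun h => n34 p hp h.symm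

def PT (p : ℕ) (x y : Fin 4 × ZMod (4*p)) : Prop :=
  (x.1 = 0 ∧ y.1 = 0 ∧ (y.2 = x.2 + 1 ∨ x.2 = y.2 + 1)) ∨
  (x.1 = 1 ∧ y.1 = 1 ∧ (y.2 = x.2 + 1 ∨ x.2 = y.2 + 1)) ∨
  (x.1 = 0 ∧ y.1 = 1 ∧ (y.2 = x.2 ∨ y.2 = x.2 + 1)) ∨
  (x.1 = 1 ∧ y.1 = 0 ∧ (x.2 = y.2 ∨ x.2 = y.2 + 1)) ∨
  (x.1 = 2 ∧ y.1 = 0 ∧ near x.2 y.2) ∨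
  (x.1 = 0 ∧ y.1 = 2 ∧ near y.2 x.2) ∨
  (x.1 = 3 ∧ y.1 = 1 ∧ near x.2 y.2) ∨
  (x.1 = 1 ∧ y.1 = 3 ∧ near y.2 x.2)

def PB (p : ℕ) (x y : Fin 4 × ZMod (4*p)) : Prop :=
  (x.1 = 0 ∧ y.1 = 0 ∧ (y.2 = x.2 + 1 ∨ x.2 = y.2 + 1)) ∨
  (x.1 = 1 ∧ y.1 = 1 ∧ (y.2 = x.2 + 1 ∨ x.2 = y.2 + 1)) ∨
  (x.1 = 0 ∧ y.1 = 1 ∧ (y.2 = x.2 ∨ x.2 = y.2 + 1)) ∨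
  (x.1 = 1 ∧ y.1 = 0 ∧ (x.2 = y.2 ∨ y.2 = x.2 + 1)) ∨
  (x.1 = 2 ∧ y.1 = 0 ∧ near x.2 y.2) ∨
  (x.1 = 0 ∧ y.1 = 2 ∧ near y.2 x.2) ∨
  (x.1 = 3 ∧ y.1 = 1 ∧ near x.2 y.2) ∨
  (x.1 = 1 ∧ y.1 = 3 ∧ near y.2 x.2)

lemma nearold_iff {n : ℕ} (a b : ZMod n) : (b = a - 1 ∨ b = a ∨ b = a + 1) ↔ near a b := by
  unfold near
  constructor
  · rintro (h|h|h)
    · exact Or.inl (by rw [h]; ring)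
    · exact Or.inr (Or.inl h)
    · exact Or.inr (Or.inr h)
  · rintro (h|h|h)
    · exact Or.inl (by rw [h]; ring)
    · exact Or.inr (Or.inl h)
    · exact Or.inr (Or.inr h)

lemma mem_diagT (p : ℕ) (x y : Fin 4 × ZMod (4*p)) :
    s(x,y) ∈ diagT p ↔ (x.1=0 ∧ y.1=1 ∧ y.2=x.2+1) ∨ (x.1=1 ∧ y.1=0 ∧ x.2=y.2+1) := by
  simp [diagT, Sym2.eq, Sym2.rel_iff', Prod.ext_iff]
  constructor
  · rintro ⟨i, (⟨⟨h1,h2⟩,h3,h4⟩|⟨⟨h1,h2⟩,h3,h4⟩)⟩ <;> subst_vars <;> tauto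
  · rintro (⟨h1,h2,h3⟩|⟨h1,h2,h3⟩)
    · exact ⟨x.2, Or.inl (by simp [h1,h2,h3])⟩
    · exact ⟨y.2, Or.inr (by simp [h1,h2,h3])⟩

lemma mem_diagB (p : ℕ) (x y : Fin 4 × ZMod (4*p)) :
    s(x,y) ∈ diagB p ↔ (x.1=0 ∧ y.1=1 ∧ x.2=y.2+1) ∨ (x.1=1 ∧ y.1=0 ∧ y.2=x.2+1) := by
  simp [diagB, Sym2.eq, Sym2.rel_iff', Prod.ext_iff]
  constructor
  · rintro ⟨i, (⟨⟨h1,h2⟩,h3,h4⟩|⟨⟨h1,h2⟩,h3,h4⟩)⟩ <;> subst_vars <;> tauto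
  · rintro (⟨h1,h2,h3⟩|⟨h1,h2,h3⟩)
    · exact ⟨y.2, Or.inl (by simp [h1,h2,h3])⟩
    · exact ⟨x.2, Or.inr (by simp [h1,h2,h3])⟩

lemma PT_ne (p : ℕ) (hp : 2 ≤ p) (x y : Fin 4 × ZMod (4*p)) (h : PT p x y) : x ≠ y := by
  rintro rfl
  unfold PT near at h
  simp only [left_eq_add] at h
  rcases h with ⟨-,-,h|h⟩|⟨-,-,h|h⟩|⟨h,h',-⟩|⟨h,h',-⟩|⟨h,h',-⟩|⟨h,h',-⟩|⟨h,h',-⟩|⟨h,h',-⟩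
  · exact z1 p hp h
  · exact z1 p hp h
  · exact z1 p hp h
  · exact z1 p hp h
  all_goals rw [h] at h'; exact absurd h' (by decide)

lemma PB_ne (p : ℕ) (hp : 2 ≤ p) (x y : Fin 4 × ZMod (4*p)) (h : PB p x y) : x ≠ y := by
  rintro rfl
  unfold PB near at h
  simp only [left_eq_add] at h
  rcases h with ⟨-,-,h|h⟩|⟨-,-,h|h⟩|⟨h,h',-⟩|⟨h,h',-⟩|⟨h,h',-⟩|⟨h,h',-⟩|⟨h,h',-⟩|⟨h,h',-⟩
  · exact z1 p hp h
  · exact z1 p hp h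
  · exact z1 p hp h
  · exact z1 p hp h
  all_goals rw [h] at h'; exact absurd h' (by decide)

set_option maxHeartbeats 800000 in
lemma adjT_iff (p : ℕ) (hp : 2 ≤ p) (x y : Fin 4 × ZMod (4*p)) :
    (ladder p ⊔ SimpleGraph.fromEdgeSet (diagT p)).Adj x y ↔ PT p x y := by
  constructor
  · intro h
    rw [SimpleGraph.sup_adj, SimpleGraph.fromEdgeSet_adj, mem_diagT] at h
    rw [ladder, SimpleGraph.fromRel_adj] at h
    unfold PT
    rcases h with ⟨hne, (⟨h1,h2,h3⟩|⟨h1,h2,h3⟩|⟨h1,h2,h3⟩|⟨h1,h2,h3⟩|⟨h1,h2,h3⟩)|(⟨h1,h2,h3⟩|⟨h1,h2,h3⟩|⟨h1,h2,h3⟩|⟨h1,h2,h3⟩|⟨h1,h2,h3⟩)⟩ | ⟨⟨h1,h2,h3⟩|⟨h1,h2,h3⟩, hne⟩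
    · exact Or.inl ⟨h1,h2,Or.inl h3⟩
    · exact Or.inr (Or.inl ⟨h1,h2,Or.inl h3⟩)
    · exact Or.inr (Or.inr (Or.inl ⟨h1,h2,Or.inl h3⟩))
    · exact Or.inr (Or.inr (Or.inr (Or.inr (Or.inl ⟨h1,h2,(nearold_iff _ _).mp h3⟩))))
    · exact Or.inr (Or.inr (Or.inr (Or.inr (Or.inr (Or.inr (Or.inl ⟨h1,h2,(nearold_iff _ _).mp h3⟩))))))
    · exact Or.inl ⟨h2,h1,Or.inr h3⟩
    · exact Or.inr (Or.inl ⟨h2,h1,Or.inr h3⟩)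
    · exact Or.inr (Or.inr (Or.inr (Or.inl ⟨h2,h1,Or.inl h3⟩)))
    · exact Or.inr (Or.inr (Or.inr (Or.inr (Or.inr (Or.inl ⟨h2,h1,(nearold_iff _ _).mp h3⟩)))))
    · exact Or.inr (Or.inr (Or.inr (Or.inr (Or.inr (Or.inr (Or.inr ⟨h2,h1,(nearold_iff _ _).mp h3⟩))))))
    · exact Or.inr (Or.inr (Or.inl ⟨h1,h2,Or.inr h3⟩))
    · exact Or.inr (Or.inr (Or.inr (Or.inl ⟨h1,h2,Or.inr h3⟩)))
  · intro h
    have hne : x ≠ y := PT_ne p hp x y h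
    rw [SimpleGraph.sup_adj, SimpleGraph.fromEdgeSet_adj, mem_diagT]
    rw [ladder, SimpleGraph.fromRel_adj]
    unfold PT at h
    rcases h with ⟨h1,h2,h3|h3⟩|⟨h1,h2,h3|h3⟩|⟨h1,h2,h3|h3⟩|⟨h1,h2,h3|h3⟩|⟨h1,h2,h3⟩|⟨h1,h2,h3⟩|⟨h1,h2,h3⟩|⟨h1,h2,h3⟩ <;>
      [exact Or.inl ⟨hne, Or.inl (Or.inl ⟨h1,h2,h3⟩)⟩;
       exact Or.inl ⟨hne, Or.inr (Or.inl ⟨h2,h1,h3⟩)⟩;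
       exact Or.inl ⟨hne, Or.inl (Or.inr (Or.inl ⟨h1,h2,h3⟩))⟩;
       exact Or.inl ⟨hne, Or.inr (Or.inr (Or.inl ⟨h2,h1,h3⟩))⟩;
       exact Or.inl ⟨hne, Or.inl (Or.inr (Or.inr (Or.inl ⟨h1,h2,h3⟩)))⟩;
       exact Or.inr ⟨Or.inl ⟨h1,h2,h3⟩, hne⟩;
       exact Or.inl ⟨hne, Or.inr (Or.inr (Or.inr (Or.inl ⟨h2,h1,h3⟩)))⟩;
       exact Or.inr ⟨Or.inr ⟨h1,h2,h3⟩, hne⟩;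
       exact Or.inl ⟨hne, Or.inl (Or.inr (Or.inr (Or.inr (Or.inl ⟨h1,h2,(nearold_iff _ _).mpr h3⟩))))⟩;
       exact Or.inl ⟨hne, Or.inr (Or.inr (Or.inr (Or.inr (Or.inl ⟨h2,h1,(nearold_iff _ _).mpr h3⟩))))⟩;
       exact Or.inl ⟨hne, Or.inl (Or.inr (Or.inr (Or.inr (Or.inr ⟨h1,h2,(nearold_iff _ _).mpr h3⟩))))⟩;
       exact Or.inl ⟨hne, Or.inr (Or.inr (Or.inr (Or.inr (Or.inr ⟨h2,h1,(nearold_iff _ _).mpr h3⟩))))⟩]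
set_option maxHeartbeats 800000 in
lemma adjB_iff (p : ℕ) (hp : 2 ≤ p) (x y : Fin 4 × ZMod (4*p)) :
    (ladder p ⊔ SimpleGraph.fromEdgeSet (diagB p)).Adj x y ↔ PB p x y := by
  constructor
  · intro h
    rw [SimpleGraph.sup_adj, SimpleGraph.fromEdgeSet_adj, mem_diagB] at h
    rw [ladder, SimpleGraph.fromRel_adj] at h
    unfold PB
    rcases h with ⟨hne, (⟨h1,h2,h3⟩|⟨h1,h2,h3⟩|⟨h1,h2,h3⟩|⟨h1,h2,h3⟩|⟨h1,h2,h3⟩)|(⟨h1,h2,h3⟩|⟨h1,h2,h3⟩|⟨h1,h2,h3⟩|⟨h1,h2,h3⟩|⟨h1,h2,h3⟩)⟩ | ⟨⟨h1,h2,h3⟩|⟨h1,h2,h3⟩, hne⟩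
    · exact Or.inl ⟨h1,h2,Or.inl h3⟩
    · exact Or.inr (Or.inl ⟨h1,h2,Or.inl h3⟩)
    · exact Or.inr (Or.inr (Or.inl ⟨h1,h2,Or.inl h3⟩))
    · exact Or.inr (Or.inr (Or.inr (Or.inr (Or.inl ⟨h1,h2,(nearold_iff _ _).mp h3⟩))))
    · exact Or.inr (Or.inr (Or.inr (Or.inr (Or.inr (Or.inr (Or.inl ⟨h1,h2,(nearold_iff _ _).mp h3⟩))))))
    · exact Or.inl ⟨h2,h1,Or.inr h3⟩
    · exact Or.inr (Or.inl ⟨h2,h1,Or.inr h3⟩)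
    · exact Or.inr (Or.inr (Or.inr (Or.inl ⟨h2,h1,Or.inl h3⟩)))
    · exact Or.inr (Or.inr (Or.inr (Or.inr (Or.inr (Or.inl ⟨h2,h1,(nearold_iff _ _).mp h3⟩)))))
    · exact Or.inr (Or.inr (Or.inr (Or.inr (Or.inr (Or.inr (Or.inr ⟨h2,h1,(nearold_iff _ _).mp h3⟩))))))
    · exact Or.inr (Or.inr (Or.inl ⟨h1,h2,Or.inr h3⟩))
    · exact Or.inr (Or.inr (Or.inr (Or.inl ⟨h1,h2,Or.inr h3⟩)))
  · intro h
    have hne : x ≠ y := PB_ne p hp x y h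
    rw [SimpleGraph.sup_adj, SimpleGraph.fromEdgeSet_adj, mem_diagB]
    rw [ladder, SimpleGraph.fromRel_adj]
    unfold PB at h
    rcases h with ⟨h1,h2,h3|h3⟩|⟨h1,h2,h3|h3⟩|⟨h1,h2,h3|h3⟩|⟨h1,h2,h3|h3⟩|⟨h1,h2,h3⟩|⟨h1,h2,h3⟩|⟨h1,h2,h3⟩|⟨h1,h2,h3⟩ <;>
      [exact Or.inl ⟨hne, Or.inl (Or.inl ⟨h1,h2,h3⟩)⟩;
       exact Or.inl ⟨hne, Or.inr (Or.inl ⟨h2,h1,h3⟩)⟩;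
       exact Or.inl ⟨hne, Or.inl (Or.inr (Or.inl ⟨h1,h2,h3⟩))⟩;
       exact Or.inl ⟨hne, Or.inr (Or.inr (Or.inl ⟨h2,h1,h3⟩))⟩;
       exact Or.inl ⟨hne, Or.inl (Or.inr (Or.inr (Or.inl ⟨h1,h2,h3⟩)))⟩;
       exact Or.inr ⟨Or.inl ⟨h1,h2,h3⟩, hne⟩;
       exact Or.inl ⟨hne, Or.inr (Or.inr (Or.inr (Or.inl ⟨h2,h1,h3⟩)))⟩;
       exact Or.inr ⟨Or.inr ⟨h1,h2,h3⟩, hne⟩;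
       exact Or.inl ⟨hne, Or.inl (Or.inr (Or.inr (Or.inr (Or.inl ⟨h1,h2,(nearold_iff _ _).mpr h3⟩))))⟩;
       exact Or.inl ⟨hne, Or.inr (Or.inr (Or.inr (Or.inr (Or.inl ⟨h2,h1,(nearold_iff _ _).mpr h3⟩))))⟩;
       exact Or.inl ⟨hne, Or.inl (Or.inr (Or.inr (Or.inr (Or.inr ⟨h1,h2,(nearold_iff _ _).mpr h3⟩))))⟩;
       exact Or.inl ⟨hne, Or.inr (Or.inr (Or.inr (Or.inr (Or.inr ⟨h2,h1,(nearold_iff _ _).mpr h3⟩))))⟩]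

set_option maxHeartbeats 3000000 in
lemma noU (p : ℕ) (hp : 2 ≤ p) (a b c d : Fin 4 × ZMod (4*p))
    (h2a : a.1 = 2)
    (hac : a ≠ c) (hbd : b ≠ d)
    (pab : PT p a b) (pbc : PT p b c) (pcd : PT p c d) (pda : PT p d a)
    (nac : ¬ PT p a c) (nbd : ¬ PT p b d) : False := by
  obtain ⟨a1, a2⟩ := a; obtain ⟨b1, b2⟩ := b; obtain ⟨c1, c2⟩ := c; obtain ⟨d1, d2⟩ := d
  simp only at h2a; subst h2a
  simp only [PT, near, Prod.mk.injEq, Fin.reduceEq, true_and, false_and, and_false, and_true,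
    or_false, false_or, not_false_eq_true, ne_eq] at *
  obtain ⟨rfl, pab⟩ := pab
  obtain ⟨rfl, pda⟩ := pda
  have quad : ∀ v : Fin 4, v = 0 ∨ v = 1 ∨ v = 2 ∨ v = 3 := by decide
  rcases quad c1 with rfl | rfl | rfl | rfl <;>
  simp only [PT, near, Prod.mk.injEq, Fin.reduceEq, true_and, false_and, and_false, and_true,
    or_false, false_or, not_false_eq_true, ne_eq] at pbc pcd nac nbd hac hbd <;>
  (try push_neg at nac nbd) <;>
  casesm* _ ∨ _, _ ∧ _ <;>
  subst_vars <;>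
  (try simp only [Fin.reduceEq, not_or, true_implies, false_implies, not_true, not_false_iff,
      eq_self_iff_true, add_assoc, neg_eq_iff_add_eq_zero, eq_neg_iff_add_eq_zero,
      left_eq_add, add_eq_left, right_eq_add, add_eq_right,
      add_right_inj, add_left_inj,
      (by norm_num : (1:ZMod (4*p))+1 = 2), (by norm_num : (2:ZMod (4*p))+2 = 4),
      (by norm_num : (1:ZMod (4*p))+2 = 3), (by norm_num : (2:ZMod (4*p))+1 = 3),
      (by norm_num : (1:ZMod (4*p))+3 = 4), (by norm_num : (3:ZMod (4*p))+1 = 4),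
      z1 p hp, z2 p hp, z3 p hp, z4 p hp, n12 p hp, n21 p hp, n13 p hp, n31 p hp,
      n14 p hp, n41 p hp, n23 p hp, n32 p hp, n24 p hp, n42 p hp, n34 p hp, n43 p hp] at *) <;>
  (try contradiction) <;>
  casesm* _ ∨ _, _ ∧ _ <;>
  subst_vars <;>
  (try simp only [Fin.reduceEq, not_or, true_implies, false_implies, not_true, not_false_iff,
      eq_self_iff_true, add_assoc, neg_eq_iff_add_eq_zero, eq_neg_iff_add_eq_zero,
      left_eq_add, add_eq_left, right_eq_add, add_eq_right,
      add_right_inj, add_left_inj,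
      (by norm_num : (1:ZMod (4*p))+1 = 2), (by norm_num : (2:ZMod (4*p))+2 = 4),
      (by norm_num : (1:ZMod (4*p))+2 = 3), (by norm_num : (2:ZMod (4*p))+1 = 3),
      (by norm_num : (1:ZMod (4*p))+3 = 4), (by norm_num : (3:ZMod (4*p))+1 = 4),
      z1 p hp, z2 p hp, z3 p hp, z4 p hp, n12 p hp, n21 p hp, n13 p hp, n31 p hp,
      n14 p hp, n41 p hp, n23 p hp, n32 p hp, n24 p hp, n42 p hp, n34 p hp, n43 p hp] at *) <;>
  try contradiction

set_option maxHeartbeats 3000000 in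
lemma noD (p : ℕ) (hp : 2 ≤ p) (a b c d : Fin 4 × ZMod (4*p))
    (h2a : a.1 = 3)
    (hac : a ≠ c) (hbd : b ≠ d)
    (pab : PT p a b) (pbc : PT p b c) (pcd : PT p c d) (pda : PT p d a)
    (nac : ¬ PT p a c) (nbd : ¬ PT p b d) : False := by
  obtain ⟨a1, a2⟩ := a; obtain ⟨b1, b2⟩ := b; obtain ⟨c1, c2⟩ := c; obtain ⟨d1, d2⟩ := d
  simp only at h2a; subst h2a
  simp only [PT, near, Prod.mk.injEq, Fin.reduceEq, true_and, false_and, and_false, and_true,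
    or_false, false_or, not_false_eq_true, ne_eq] at *
  obtain ⟨rfl, pab⟩ := pab
  obtain ⟨rfl, pda⟩ := pda
  have quad : ∀ v : Fin 4, v = 0 ∨ v = 1 ∨ v = 2 ∨ v = 3 := by decide
  rcases quad c1 with rfl | rfl | rfl | rfl <;>
  simp only [PT, near, Prod.mk.injEq, Fin.reduceEq, true_and, false_and, and_false, and_true,
    or_false, false_or, not_false_eq_true, ne_eq] at pbc pcd nac nbd hac hbd <;>
  (try push_neg at nac nbd) <;>
  casesm* _ ∨ _, _ ∧ _ <;>
  subst_vars <;>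
  (try simp only [Fin.reduceEq, not_or, true_implies, false_implies, not_true, not_false_iff,
      eq_self_iff_true, add_assoc, neg_eq_iff_add_eq_zero, eq_neg_iff_add_eq_zero,
      left_eq_add, add_eq_left, right_eq_add, add_eq_right,
      add_right_inj, add_left_inj,
      (by norm_num : (1:ZMod (4*p))+1 = 2), (by norm_num : (2:ZMod (4*p))+2 = 4),
      (by norm_num : (1:ZMod (4*p))+2 = 3), (by norm_num : (2:ZMod (4*p))+1 = 3),
      (by norm_num : (1:ZMod (4*p))+3 = 4), (by norm_num : (3:ZMod (4*p))+1 = 4),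
      z1 p hp, z2 p hp, z3 p hp, z4 p hp, n12 p hp, n21 p hp, n13 p hp, n31 p hp,
      n14 p hp, n41 p hp, n23 p hp, n32 p hp, n24 p hp, n42 p hp, n34 p hp, n43 p hp] at *) <;>
  (try contradiction) <;>
  casesm* _ ∨ _, _ ∧ _ <;>
  subst_vars <;>
  (try simp only [Fin.reduceEq, not_or, true_implies, false_implies, not_true, not_false_iff,
      eq_self_iff_true, add_assoc, neg_eq_iff_add_eq_zero, eq_neg_iff_add_eq_zero,
      left_eq_add, add_eq_left, right_eq_add, add_eq_right,
      add_right_inj, add_left_inj,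
      (by norm_num : (1:ZMod (4*p))+1 = 2), (by norm_num : (2:ZMod (4*p))+2 = 4),
      (by norm_num : (1:ZMod (4*p))+2 = 3), (by norm_num : (2:ZMod (4*p))+1 = 3),
      (by norm_num : (1:ZMod (4*p))+3 = 4), (by norm_num : (3:ZMod (4*p))+1 = 4),
      z1 p hp, z2 p hp, z3 p hp, z4 p hp, n12 p hp, n21 p hp, n13 p hp, n31 p hp,
      n14 p hp, n41 p hp, n23 p hp, n32 p hp, n24 p hp, n42 p hp, n34 p hp, n43 p hp] at *) <;>
  try contradiction

lemma PT_symm' (p : ℕ) (x y : Fin 4 × ZMod (4*p)) (h : PT p x y) : PT p y x := by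
  unfold PT near at h ⊢
  rcases h with ⟨h1,h2,h3⟩|⟨h1,h2,h3⟩|⟨h1,h2,h3⟩|⟨h1,h2,h3⟩|⟨h1,h2,h3⟩|⟨h1,h2,h3⟩|⟨h1,h2,h3⟩|⟨h1,h2,h3⟩
  · exact Or.inl ⟨h2,h1,h3.symm⟩
  · exact Or.inr (Or.inl ⟨h2,h1,h3.symm⟩)
  · exact Or.inr (Or.inr (Or.inr (Or.inl ⟨h2,h1,h3⟩)))
  · exact Or.inr (Or.inr (Or.inl ⟨h2,h1,h3⟩))
  · exact Or.inr (Or.inr (Or.inr (Or.inr (Or.inr (Or.inl ⟨h2,h1,h3⟩)))))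
  · exact Or.inr (Or.inr (Or.inr (Or.inr (Or.inl ⟨h2,h1,h3⟩))))
  · exact Or.inr (Or.inr (Or.inr (Or.inr (Or.inr (Or.inr (Or.inr ⟨h2,h1,h3⟩))))))
  · exact Or.inr (Or.inr (Or.inr (Or.inr (Or.inr (Or.inr (Or.inl ⟨h2,h1,h3⟩))))))

set_option maxHeartbeats 3000000 in
lemma core (p : ℕ) (hp : 2 ≤ p) (a b c d : Fin 4 × ZMod (4*p))
    (hac : a ≠ c) (hbd : b ≠ d)
    (pab : PT p a b) (pbc : PT p b c) (pcd : PT p c d) (pda : PT p d a)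
    (nac : ¬ PT p a c) (nbd : ¬ PT p b d) : False := by
  have nca : ¬ PT p c a := fun h => nac (PT_symm' p c a h)
  have ndb : ¬ PT p d b := fun h => nbd (PT_symm' p d b h)
  have ha2 : a.1 ≠ 2 := fun h => noU p hp a b c d h hac hbd pab pbc pcd pda nac nbd
  have hb2 : b.1 ≠ 2 := fun h => noU p hp b c d a h hbd hac.symm pbc pcd pda pab nbd nca
  have hc2 : c.1 ≠ 2 := fun h => noU p hp c d a b h hac.symm hbd.symm pcd pda pab pbc nca ndb
  have hd2 : d.1 ≠ 2 := fun h => noU p hp d a b c h hbd.symm hac pda pab pbc pcd ndb nac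
  have ha3 : a.1 ≠ 3 := fun h => noD p hp a b c d h hac hbd pab pbc pcd pda nac nbd
  have hb3 : b.1 ≠ 3 := fun h => noD p hp b c d a h hbd hac.symm pbc pcd pda pab nbd nca
  have hc3 : c.1 ≠ 3 := fun h => noD p hp c d a b h hac.symm hbd.symm pcd pda pab pbc nca ndb
  have hd3 : d.1 ≠ 3 := fun h => noD p hp d a b c h hbd.symm hac pda pab pbc pcd ndb nac
  have bin : ∀ v : Fin 4, v ≠ 2 → v ≠ 3 → v = 0 ∨ v = 1 := by decide
  obtain ⟨a1, a2⟩ := a; obtain ⟨b1, b2⟩ := b; obtain ⟨c1, c2⟩ := c; obtain ⟨d1, d2⟩ := d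
  rcases bin a1 ha2 ha3 with rfl | rfl <;> rcases bin b1 hb2 hb3 with rfl | rfl <;>
    rcases bin c1 hc2 hc3 with rfl | rfl <;> rcases bin d1 hd2 hd3 with rfl | rfl <;>
  simp only [PT, near, Prod.mk.injEq, Fin.reduceEq, true_and, false_and, and_false, and_true,
    or_false, false_or, not_false_eq_true, ne_eq] at pab pbc pcd pda nac nbd hac hbd <;>
  (try push_neg at nac nbd) <;>
  (try exact pab) <;> (try exact pbc) <;> (try exact pcd) <;> (try exact pda) <;>
  casesm* _ ∨ _, _ ∧ _ <;>
  subst_vars <;>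
  (try simp only [Fin.reduceEq, not_or, true_implies, false_implies, not_true, not_false_iff,
      eq_self_iff_true, add_assoc, neg_eq_iff_add_eq_zero, eq_neg_iff_add_eq_zero,
      left_eq_add, add_eq_left, right_eq_add, add_eq_right,
      add_right_inj, add_left_inj,
      (by norm_num : (1:ZMod (4*p))+1 = 2), (by norm_num : (2:ZMod (4*p))+2 = 4),
      (by norm_num : (1:ZMod (4*p))+2 = 3), (by norm_num : (2:ZMod (4*p))+1 = 3),
      (by norm_num : (1:ZMod (4*p))+3 = 4), (by norm_num : (3:ZMod (4*p))+1 = 4),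
      z1 p hp, z2 p hp, z3 p hp, z4 p hp, n12 p hp, n21 p hp, n13 p hp, n31 p hp,
      n14 p hp, n41 p hp, n23 p hp, n32 p hp, n24 p hp, n42 p hp, n34 p hp, n43 p hp] at *) <;>
  (try contradiction) <;>
  casesm* _ ∨ _, _ ∧ _ <;>
  subst_vars <;>
  (try simp only [Fin.reduceEq, not_or, true_implies, false_implies, not_true, not_false_iff,
      eq_self_iff_true, add_assoc, neg_eq_iff_add_eq_zero, eq_neg_iff_add_eq_zero,
      left_eq_add, add_eq_left, right_eq_add, add_eq_right,
      add_right_inj, add_left_inj,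
      (by norm_num : (1:ZMod (4*p))+1 = 2), (by norm_num : (2:ZMod (4*p))+2 = 4),
      (by norm_num : (1:ZMod (4*p))+2 = 3), (by norm_num : (2:ZMod (4*p))+1 = 3),
      (by norm_num : (1:ZMod (4*p))+3 = 4), (by norm_num : (3:ZMod (4*p))+1 = 4),
      z1 p hp, z2 p hp, z3 p hp, z4 p hp, n12 p hp, n21 p hp, n13 p hp, n31 p hp,
      n14 p hp, n41 p hp, n23 p hp, n32 p hp, n24 p hp, n42 p hp, n34 p hp, n43 p hp] at *) <;>
  try contradiction

set_option maxHeartbeats 3000000 in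
lemma noUB (p : ℕ) (hp : 2 ≤ p) (a b c d : Fin 4 × ZMod (4*p))
    (h2a : a.1 = 2)
    (hac : a ≠ c) (hbd : b ≠ d)
    (pab : PB p a b) (pbc : PB p b c) (pcd : PB p c d) (pda : PB p d a)
    (nac : ¬ PB p a c) (nbd : ¬ PB p b d) : False := by
  obtain ⟨a1, a2⟩ := a; obtain ⟨b1, b2⟩ := b; obtain ⟨c1, c2⟩ := c; obtain ⟨d1, d2⟩ := d
  simp only at h2a; subst h2a
  simp only [PB, near, Prod.mk.injEq, Fin.reduceEq, true_and, false_and, and_false, and_true,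
    or_false, false_or, not_false_eq_true, ne_eq] at *
  obtain ⟨rfl, pab⟩ := pab
  obtain ⟨rfl, pda⟩ := pda
  have quad : ∀ v : Fin 4, v = 0 ∨ v = 1 ∨ v = 2 ∨ v = 3 := by decide
  rcases quad c1 with rfl | rfl | rfl | rfl <;>
  simp only [PB, near, Prod.mk.injEq, Fin.reduceEq, true_and, false_and, and_false, and_true,
    or_false, false_or, not_false_eq_true, ne_eq] at pbc pcd nac nbd hac hbd <;>
  (try push_neg at nac nbd) <;>
  casesm* _ ∨ _, _ ∧ _ <;>
  subst_vars <;>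
  (try simp only [Fin.reduceEq, not_or, true_implies, false_implies, not_true, not_false_iff,
      eq_self_iff_true, add_assoc, neg_eq_iff_add_eq_zero, eq_neg_iff_add_eq_zero,
      left_eq_add, add_eq_left, right_eq_add, add_eq_right,
      add_right_inj, add_left_inj,
      (by norm_num : (1:ZMod (4*p))+1 = 2), (by norm_num : (2:ZMod (4*p))+2 = 4),
      (by norm_num : (1:ZMod (4*p))+2 = 3), (by norm_num : (2:ZMod (4*p))+1 = 3),
      (by norm_num : (1:ZMod (4*p))+3 = 4), (by norm_num : (3:ZMod (4*p))+1 = 4),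
      z1 p hp, z2 p hp, z3 p hp, z4 p hp, n12 p hp, n21 p hp, n13 p hp, n31 p hp,
      n14 p hp, n41 p hp, n23 p hp, n32 p hp, n24 p hp, n42 p hp, n34 p hp, n43 p hp] at *) <;>
  (try contradiction) <;>
  casesm* _ ∨ _, _ ∧ _ <;>
  subst_vars <;>
  (try simp only [Fin.reduceEq, not_or, true_implies, false_implies, not_true, not_false_iff,
      eq_self_iff_true, add_assoc, neg_eq_iff_add_eq_zero, eq_neg_iff_add_eq_zero,
      left_eq_add, add_eq_left, right_eq_add, add_eq_right,
      add_right_inj, add_left_inj,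
      (by norm_num : (1:ZMod (4*p))+1 = 2), (by norm_num : (2:ZMod (4*p))+2 = 4),
      (by norm_num : (1:ZMod (4*p))+2 = 3), (by norm_num : (2:ZMod (4*p))+1 = 3),
      (by norm_num : (1:ZMod (4*p))+3 = 4), (by norm_num : (3:ZMod (4*p))+1 = 4),
      z1 p hp, z2 p hp, z3 p hp, z4 p hp, n12 p hp, n21 p hp, n13 p hp, n31 p hp,
      n14 p hp, n41 p hp, n23 p hp, n32 p hp, n24 p hp, n42 p hp, n34 p hp, n43 p hp] at *) <;>
  try contradiction

set_option maxHeartbeats 3000000 in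
lemma noDB (p : ℕ) (hp : 2 ≤ p) (a b c d : Fin 4 × ZMod (4*p))
    (h2a : a.1 = 3)
    (hac : a ≠ c) (hbd : b ≠ d)
    (pab : PB p a b) (pbc : PB p b c) (pcd : PB p c d) (pda : PB p d a)
    (nac : ¬ PB p a c) (nbd : ¬ PB p b d) : False := by
  obtain ⟨a1, a2⟩ := a; obtain ⟨b1, b2⟩ := b; obtain ⟨c1, c2⟩ := c; obtain ⟨d1, d2⟩ := d
  simp only at h2a; subst h2a
  simp only [PB, near, Prod.mk.injEq, Fin.reduceEq, true_and, false_and, and_false, and_true,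
    or_false, false_or, not_false_eq_true, ne_eq] at *
  obtain ⟨rfl, pab⟩ := pab
  obtain ⟨rfl, pda⟩ := pda
  have quad : ∀ v : Fin 4, v = 0 ∨ v = 1 ∨ v = 2 ∨ v = 3 := by decide
  rcases quad c1 with rfl | rfl | rfl | rfl <;>
  simp only [PB, near, Prod.mk.injEq, Fin.reduceEq, true_and, false_and, and_false, and_true,
    or_false, false_or, not_false_eq_true, ne_eq] at pbc pcd nac nbd hac hbd <;>
  (try push_neg at nac nbd) <;>
  casesm* _ ∨ _, _ ∧ _ <;>
  subst_vars <;>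
  (try simp only [Fin.reduceEq, not_or, true_implies, false_implies, not_true, not_false_iff,
      eq_self_iff_true, add_assoc, neg_eq_iff_add_eq_zero, eq_neg_iff_add_eq_zero,
      left_eq_add, add_eq_left, right_eq_add, add_eq_right,
      add_right_inj, add_left_inj,
      (by norm_num : (1:ZMod (4*p))+1 = 2), (by norm_num : (2:ZMod (4*p))+2 = 4),
      (by norm_num : (1:ZMod (4*p))+2 = 3), (by norm_num : (2:ZMod (4*p))+1 = 3),
      (by norm_num : (1:ZMod (4*p))+3 = 4), (by norm_num : (3:ZMod (4*p))+1 = 4),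
      z1 p hp, z2 p hp, z3 p hp, z4 p hp, n12 p hp, n21 p hp, n13 p hp, n31 p hp,
      n14 p hp, n41 p hp, n23 p hp, n32 p hp, n24 p hp, n42 p hp, n34 p hp, n43 p hp] at *) <;>
  (try contradiction) <;>
  casesm* _ ∨ _, _ ∧ _ <;>
  subst_vars <;>
  (try simp only [Fin.reduceEq, not_or, true_implies, false_implies, not_true, not_false_iff,
      eq_self_iff_true, add_assoc, neg_eq_iff_add_eq_zero, eq_neg_iff_add_eq_zero,
      left_eq_add, add_eq_left, right_eq_add, add_eq_right,
      add_right_inj, add_left_inj,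
      (by norm_num : (1:ZMod (4*p))+1 = 2), (by norm_num : (2:ZMod (4*p))+2 = 4),
      (by norm_num : (1:ZMod (4*p))+2 = 3), (by norm_num : (2:ZMod (4*p))+1 = 3),
      (by norm_num : (1:ZMod (4*p))+3 = 4), (by norm_num : (3:ZMod (4*p))+1 = 4),
      z1 p hp, z2 p hp, z3 p hp, z4 p hp, n12 p hp, n21 p hp, n13 p hp, n31 p hp,
      n14 p hp, n41 p hp, n23 p hp, n32 p hp, n24 p hp, n42 p hp, n34 p hp, n43 p hp] at *) <;>
  try contradiction

lemma PB_symm' (p : ℕ) (x y : Fin 4 × ZMod (4*p)) (h : PB p x y) : PB p y x := by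
  unfold PB near at h ⊢
  rcases h with ⟨h1,h2,h3⟩|⟨h1,h2,h3⟩|⟨h1,h2,h3⟩|⟨h1,h2,h3⟩|⟨h1,h2,h3⟩|⟨h1,h2,h3⟩|⟨h1,h2,h3⟩|⟨h1,h2,h3⟩
  · exact Or.inl ⟨h2,h1,h3.symm⟩
  · exact Or.inr (Or.inl ⟨h2,h1,h3.symm⟩)
  · exact Or.inr (Or.inr (Or.inr (Or.inl ⟨h2,h1,h3⟩)))
  · exact Or.inr (Or.inr (Or.inl ⟨h2,h1,h3⟩))
  · exact Or.inr (Or.inr (Or.inr (Or.inr (Or.inr (Or.inl ⟨h2,h1,h3⟩)))))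
  · exact Or.inr (Or.inr (Or.inr (Or.inr (Or.inl ⟨h2,h1,h3⟩))))
  · exact Or.inr (Or.inr (Or.inr (Or.inr (Or.inr (Or.inr (Or.inr ⟨h2,h1,h3⟩))))))
  · exact Or.inr (Or.inr (Or.inr (Or.inr (Or.inr (Or.inr (Or.inl ⟨h2,h1,h3⟩))))))

set_option maxHeartbeats 3000000 in
lemma coreB (p : ℕ) (hp : 2 ≤ p) (a b c d : Fin 4 × ZMod (4*p))
    (hac : a ≠ c) (hbd : b ≠ d)
    (pab : PB p a b) (pbc : PB p b c) (pcd : PB p c d) (pda : PB p d a)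
    (nac : ¬ PB p a c) (nbd : ¬ PB p b d) : False := by
  have nca : ¬ PB p c a := fun h => nac (PB_symm' p c a h)
  have ndb : ¬ PB p d b := fun h => nbd (PB_symm' p d b h)
  have ha2 : a.1 ≠ 2 := fun h => noUB p hp a b c d h hac hbd pab pbc pcd pda nac nbd
  have hb2 : b.1 ≠ 2 := fun h => noUB p hp b c d a h hbd hac.symm pbc pcd pda pab nbd nca
  have hc2 : c.1 ≠ 2 := fun h => noUB p hp c d a b h hac.symm hbd.symm pcd pda pab pbc nca ndb
  have hd2 : d.1 ≠ 2 := fun h => noUB p hp d a b c h hbd.symm hac pda pab pbc pcd ndb nac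
  have ha3 : a.1 ≠ 3 := fun h => noDB p hp a b c d h hac hbd pab pbc pcd pda nac nbd
  have hb3 : b.1 ≠ 3 := fun h => noDB p hp b c d a h hbd hac.symm pbc pcd pda pab nbd nca
  have hc3 : c.1 ≠ 3 := fun h => noDB p hp c d a b h hac.symm hbd.symm pcd pda pab pbc nca ndb
  have hd3 : d.1 ≠ 3 := fun h => noDB p hp d a b c h hbd.symm hac pda pab pbc pcd ndb nac
  have bin : ∀ v : Fin 4, v ≠ 2 → v ≠ 3 → v = 0 ∨ v = 1 := by decide
  obtain ⟨a1, a2⟩ := a; obtain ⟨b1, b2⟩ := b; obtain ⟨c1, c2⟩ := c; obtain ⟨d1, d2⟩ := d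
  rcases bin a1 ha2 ha3 with rfl | rfl <;> rcases bin b1 hb2 hb3 with rfl | rfl <;>
    rcases bin c1 hc2 hc3 with rfl | rfl <;> rcases bin d1 hd2 hd3 with rfl | rfl <;>
  simp only [PB, near, Prod.mk.injEq, Fin.reduceEq, true_and, false_and, and_false, and_true,
    or_false, false_or, not_false_eq_true, ne_eq] at pab pbc pcd pda nac nbd hac hbd <;>
  (try push_neg at nac nbd) <;>
  (try exact pab) <;> (try exact pbc) <;> (try exact pcd) <;> (try exact pda) <;>
  casesm* _ ∨ _, _ ∧ _ <;>
  subst_vars <;>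
  (try simp only [Fin.reduceEq, not_or, true_implies, false_implies, not_true, not_false_iff,
      eq_self_iff_true, add_assoc, neg_eq_iff_add_eq_zero, eq_neg_iff_add_eq_zero,
      left_eq_add, add_eq_left, right_eq_add, add_eq_right,
      add_right_inj, add_left_inj,
      (by norm_num : (1:ZMod (4*p))+1 = 2), (by norm_num : (2:ZMod (4*p))+2 = 4),
      (by norm_num : (1:ZMod (4*p))+2 = 3), (by norm_num : (2:ZMod (4*p))+1 = 3),
      (by norm_num : (1:ZMod (4*p))+3 = 4), (by norm_num : (3:ZMod (4*p))+1 = 4),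
      z1 p hp, z2 p hp, z3 p hp, z4 p hp, n12 p hp, n21 p hp, n13 p hp, n31 p hp,
      n14 p hp, n41 p hp, n23 p hp, n32 p hp, n24 p hp, n42 p hp, n34 p hp, n43 p hp] at *) <;>
  (try contradiction) <;>
  casesm* _ ∨ _, _ ∧ _ <;>
  subst_vars <;>
  (try simp only [Fin.reduceEq, not_or, true_implies, false_implies, not_true, not_false_iff,
      eq_self_iff_true, add_assoc, neg_eq_iff_add_eq_zero, eq_neg_iff_add_eq_zero,
      left_eq_add, add_eq_left, right_eq_add, add_eq_right,
      add_right_inj, add_left_inj,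
      (by norm_num : (1:ZMod (4*p))+1 = 2), (by norm_num : (2:ZMod (4*p))+2 = 4),
      (by norm_num : (1:ZMod (4*p))+2 = 3), (by norm_num : (2:ZMod (4*p))+1 = 3),
      (by norm_num : (1:ZMod (4*p))+3 = 4), (by norm_num : (3:ZMod (4*p))+1 = 4),
      z1 p hp, z2 p hp, z3 p hp, z4 p hp, n12 p hp, n21 p hp, n13 p hp, n31 p hp,
      n14 p hp, n41 p hp, n23 p hp, n32 p hp, n24 p hp, n42 p hp, n34 p hp, n43 p hp] at *) <;>
  try contradiction

lemma C4e01 : C4.Adj 0 1 := by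
  rw [C4, SimpleGraph.fromEdgeSet_adj]
  exact ⟨Set.mem_insert _ _, by decide⟩
lemma C4e12 : C4.Adj 1 2 := by
  rw [C4, SimpleGraph.fromEdgeSet_adj]
  exact ⟨Set.mem_insert_of_mem _ (Set.mem_insert _ _), by decide⟩
lemma C4e23 : C4.Adj 2 3 := by
  rw [C4, SimpleGraph.fromEdgeSet_adj]
  exact ⟨Set.mem_insert_of_mem _ (Set.mem_insert_of_mem _ (Set.mem_insert _ _)), by decide⟩
lemma C4e30 : C4.Adj 3 0 := by
  rw [C4, SimpleGraph.fromEdgeSet_adj]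
  refine ⟨Set.mem_insert_of_mem _ (Set.mem_insert_of_mem _ (Set.mem_insert_of_mem _ rfl)), by decide⟩
lemma C4n02 : ¬ C4.Adj 0 2 := by
  rw [C4, SimpleGraph.fromEdgeSet_adj]
  rintro ⟨hm, -⟩
  simp [Sym2.eq, Sym2.rel_iff', Prod.ext_iff] at hm
lemma C4n13 : ¬ C4.Adj 1 3 := by
  rw [C4, SimpleGraph.fromEdgeSet_adj]
  rintro ⟨hm, -⟩
  simp [Sym2.eq, Sym2.rel_iff', Prod.ext_iff] at hm

noncomputable def mkC4 {V : Type} {G : SimpleGraph V} {a b c d : V}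
    (hab : G.Adj a b) (hbc : G.Adj b c) (hcd : G.Adj c d) (hda : G.Adj d a)
    (hac : ¬G.Adj a c) (hbd : ¬G.Adj b d) (hac' : a ≠ c) (hbd' : b ≠ d) :
    C4 ↪g G := by
  have nab : a ≠ b := hab.ne
  have nba : b ≠ a := hab.ne'
  have nbc : b ≠ c := hbc.ne
  have ncb : c ≠ b := hbc.ne'
  have ncd : c ≠ d := hcd.ne
  have ndc : d ≠ c := hcd.ne'
  have nda : d ≠ a := hda.ne
  have nad : a ≠ d := hda.ne'
  have nca : c ≠ a := hac'.symm
  have ndb : d ≠ b := hbd'.symm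
  refine ⟨⟨![a,b,c,d], ?_⟩, ?_⟩
  · intro i j hij
    fin_cases i <;> fin_cases j <;>
      simp_all [Matrix.cons_val_zero, Matrix.cons_val_one, Matrix.head_cons, Matrix.cons_val_succ]
  · intro i j
    fin_cases i <;> fin_cases j <;>
      simp only [Matrix.cons_val_zero, Matrix.cons_val_one, Matrix.head_cons,
        Matrix.cons_val_succ, Fin.isValue] <;>
      [exact iff_of_false (G.irrefl) (C4.irrefl);
       exact iff_of_true hab C4e01;
       exact iff_of_false hac C4n02;
       exact iff_of_true hda.symm C4e30.symm;
       exact iff_of_true hab.symm C4e01.symm;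
       exact iff_of_false (G.irrefl) (C4.irrefl);
       exact iff_of_true hbc C4e12;
       exact iff_of_false hbd C4n13;
       exact iff_of_false (fun h => hac h.symm) (fun h => C4n02 h.symm);
       exact iff_of_true hbc.symm C4e12.symm;
       exact iff_of_false (G.irrefl) (C4.irrefl);
       exact iff_of_true hcd C4e23;
       exact iff_of_true hda C4e30;
       exact iff_of_false (fun h => hbd h.symm) (fun h => C4n13 h.symm);
       exact iff_of_true hcd.symm C4e23.symm;
       exact iff_of_false (G.irrefl) (C4.irrefl)]

lemma lad_tt (p : ℕ) (hp : 2 ≤ p) (i : ZMod (4*p)) : (ladder p).Adj (0,i) (0,i+1) := by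
  rw [ladder, SimpleGraph.fromRel_adj]
  constructor
  · intro h; rw [Prod.mk.injEq] at h; exact z1 p hp (left_eq_add.mp h.2)
  · exact Or.inl (Or.inl ⟨rfl, rfl, rfl⟩)

lemma lad_bb (p : ℕ) (hp : 2 ≤ p) (i : ZMod (4*p)) : (ladder p).Adj (1,i) (1,i+1) := by
  rw [ladder, SimpleGraph.fromRel_adj]
  constructor
  · intro h; rw [Prod.mk.injEq] at h; exact z1 p hp (left_eq_add.mp h.2)
  · exact Or.inl (Or.inr (Or.inl ⟨rfl, rfl, rfl⟩))

lemma lad_rung (p : ℕ) (i : ZMod (4*p)) : (ladder p).Adj (0,i) (1,i) := by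
  rw [ladder, SimpleGraph.fromRel_adj]
  constructor
  · intro h; rw [Prod.mk.injEq] at h; exact absurd h.1 (by decide)
  · exact Or.inl (Or.inr (Or.inr (Or.inl ⟨rfl, rfl, rfl⟩)))

lemma lad_ut (p : ℕ) (i j : ZMod (4*p)) (h : j = i - 1 ∨ j = i ∨ j = i + 1) :
    (ladder p).Adj (2,i) (0,j) := by
  rw [ladder, SimpleGraph.fromRel_adj]
  constructor
  · intro hh; rw [Prod.mk.injEq] at hh; exact absurd hh.1 (by decide)
  · exact Or.inl (Or.inr (Or.inr (Or.inr (Or.inl ⟨rfl, rfl, h⟩))))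

lemma lad_db (p : ℕ) (i j : ZMod (4*p)) (h : j = i - 1 ∨ j = i ∨ j = i + 1) :
    (ladder p).Adj (3,i) (1,j) := by
  rw [ladder, SimpleGraph.fromRel_adj]
  constructor
  · intro hh; rw [Prod.mk.injEq] at hh; exact absurd hh.1 (by decide)
  · exact Or.inl (Or.inr (Or.inr (Or.inr (Or.inr ⟨rfl, rfl, h⟩))))

lemma adj_sup_left {V : Type} {G H : SimpleGraph V} {x y : V} (h : G.Adj x y) : (G ⊔ H).Adj x y := by
  rw [SimpleGraph.sup_adj]; exact Or.inl h
lemma adj_sup_right {V : Type} {G H : SimpleGraph V} {x y : V} (h : H.Adj x y) : (G ⊔ H).Adj x y := by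
  rw [SimpleGraph.sup_adj]; exact Or.inr h
lemma not_adj_sup {V : Type} {G H : SimpleGraph V} {x y : V} (h1 : ¬G.Adj x y) (h2 : ¬H.Adj x y) :
    ¬(G ⊔ H).Adj x y := by
  rw [SimpleGraph.sup_adj]; rintro (h|h); exacts [h1 h, h2 h]

lemma notmemF_tt (p : ℕ) (F : Set (Sym2 (Fin 4 × ZMod (4*p)))) (hF : F ⊆ diagT p ∪ diagB p)
    (i j : ZMod (4*p)) : s(((0:Fin 4),i),((0:Fin 4),j)) ∉ F := by
  intro hm
  rcases hF hm with h | h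
  · rw [mem_diagT] at h; simp at h
  · rw [mem_diagB] at h; simp at h

lemma notmemF_bb (p : ℕ) (F : Set (Sym2 (Fin 4 × ZMod (4*p)))) (hF : F ⊆ diagT p ∪ diagB p)
    (i j : ZMod (4*p)) : s(((1:Fin 4),i),((1:Fin 4),j)) ∉ F := by
  intro hm
  rcases hF hm with h | h
  · rw [mem_diagT] at h; simp at h
  · rw [mem_diagB] at h; simp at h

lemma notmemF_u (p : ℕ) (F : Set (Sym2 (Fin 4 × ZMod (4*p)))) (hF : F ⊆ diagT p ∪ diagB p)
    (j : Fin 4) (i k : ZMod (4*p)) : s((j,i),((2:Fin 4),k)) ∉ F := by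
  intro hm
  rcases hF hm with h | h
  · rw [mem_diagT] at h; simp at h
  · rw [mem_diagB] at h; simp at h

lemma notmemF_d (p : ℕ) (F : Set (Sym2 (Fin 4 × ZMod (4*p)))) (hF : F ⊆ diagT p ∪ diagB p)
    (j : Fin 4) (i k : ZMod (4*p)) : s((j,i),((3:Fin 4),k)) ∉ F := by
  intro hm
  rcases hF hm with h | h
  · rw [mem_diagT] at h; simp at h
  · rw [mem_diagB] at h; simp at h

lemma claim1 (p : ℕ) (hp : 2 ≤ p) (F : Set (Sym2 (Fin 4 × ZMod (4*p))))
    (hF : F ⊆ diagT p ∪ diagB p)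
    (hfree : IsEmpty (C4 ↪g (ladder p ⊔ SimpleGraph.fromEdgeSet F))) (i : ZMod (4*p)) :
    s(((0:Fin 4),i),((1:Fin 4),i+1)) ∈ F ∨ s(((0:Fin 4),i+1),((1:Fin 4),i)) ∈ F := by
  by_contra hcon
  push_neg at hcon
  obtain ⟨hT, hB⟩ := hcon
  have nladAC : ¬ (ladder p).Adj (0,i) (1,i+1) := by
    rw [ladder, SimpleGraph.fromRel_adj]
    rintro ⟨-, h⟩
    simp only [Prod.mk.injEq, Fin.reduceEq, false_and, and_false, true_and, false_or, or_false] at h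
    exact z1 p hp (by linear_combination h)
  have nladBD : ¬ (ladder p).Adj (0,i+1) (1,i) := by
    rw [ladder, SimpleGraph.fromRel_adj]
    rintro ⟨-, h⟩
    simp only [Prod.mk.injEq, Fin.reduceEq, false_and, and_false, true_and, false_or, or_false] at h
    exact z1 p hp (by linear_combination -h)
  apply hfree.false
  refine mkC4 (a := ((0:Fin 4),i)) (b := ((0:Fin 4),i+1)) (c := ((1:Fin 4),i+1)) (d := ((1:Fin 4),i))
    (adj_sup_left (lad_tt p hp i)) (adj_sup_left (lad_rung p (i+1)))
    (adj_sup_left ((lad_bb p hp i).symm)) (adj_sup_left ((lad_rung p i).symm))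
    (not_adj_sup nladAC ?_) (not_adj_sup nladBD ?_) ?_ ?_
  · rw [SimpleGraph.fromEdgeSet_adj]; rintro ⟨hm, -⟩; exact hT hm
  · rw [SimpleGraph.fromEdgeSet_adj]; rintro ⟨hm, -⟩; exact hB hm
  · intro h; rw [Prod.mk.injEq] at h; exact absurd h.1 (by decide)
  · intro h; rw [Prod.mk.injEq] at h; exact absurd h.1 (by decide)

lemma lemA (p : ℕ) (hp : 2 ≤ p) (F : Set (Sym2 (Fin 4 × ZMod (4*p))))
    (hF : F ⊆ diagT p ∪ diagB p)
    (hfree : IsEmpty (C4 ↪g (ladder p ⊔ SimpleGraph.fromEdgeSet F))) (i : ZMod (4*p))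
    (h1 : s(((0:Fin 4),i),((1:Fin 4),i+1)) ∈ F)
    (h2 : s(((0:Fin 4),i+2),((1:Fin 4),i+1)) ∈ F) : False := by
  have nladAC : ¬ (ladder p).Adj (0,i) (0,i+2) := by
    rw [ladder, SimpleGraph.fromRel_adj]
    rintro ⟨-, h⟩
    simp only [Prod.mk.injEq, Fin.reduceEq, false_and, and_false, true_and, false_or, or_false] at h
    rcases h with h | h
    · exact z1 p hp (by linear_combination h)
    · exact z3 p hp (by linear_combination -h)
  have nladBD : ¬ (ladder p).Adj (1,i+1) (2,i+1) := by
    rw [ladder, SimpleGraph.fromRel_adj]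
    rintro ⟨-, h⟩
    simp only [Prod.mk.injEq, Fin.reduceEq, false_and, and_false, true_and, false_or, or_false] at h
  apply hfree.false
  refine mkC4 (a := ((0:Fin 4),i)) (b := ((1:Fin 4),i+1)) (c := ((0:Fin 4),i+2)) (d := ((2:Fin 4),i+1))
    ?_ ?_
    (adj_sup_left ((lad_ut p (i+1) (i+2) (Or.inr (Or.inr (by ring)))).symm))
    (adj_sup_left (lad_ut p (i+1) i (Or.inl (by ring))))
    (not_adj_sup nladAC (fun h => by rw [SimpleGraph.fromEdgeSet_adj] at h; exact notmemF_tt p F hF i (i+2) h.1))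
    (not_adj_sup nladBD (fun h => by rw [SimpleGraph.fromEdgeSet_adj] at h; exact notmemF_u p F hF 1 (i+1) (i+1) h.1))
    ?_ ?_
  · apply adj_sup_right; rw [SimpleGraph.fromEdgeSet_adj]
    exact ⟨h1, by intro h; rw [Prod.mk.injEq] at h; exact absurd h.1 (by decide)⟩
  · apply adj_sup_right; rw [SimpleGraph.fromEdgeSet_adj]
    refine ⟨by rw [Sym2.eq_swap]; exact h2, ?_⟩
    intro h; rw [Prod.mk.injEq] at h; exact absurd h.1 (by decide)
  · intro h; rw [Prod.mk.injEq] at h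
    exact z2 p hp (by linear_combination -h.2)
  · intro h; rw [Prod.mk.injEq] at h; exact absurd h.1 (by decide)

lemma lemB (p : ℕ) (hp : 2 ≤ p) (F : Set (Sym2 (Fin 4 × ZMod (4*p))))
    (hF : F ⊆ diagT p ∪ diagB p)
    (hfree : IsEmpty (C4 ↪g (ladder p ⊔ SimpleGraph.fromEdgeSet F))) (i : ZMod (4*p))
    (h1 : s(((0:Fin 4),i+1),((1:Fin 4),i)) ∈ F)
    (h2 : s(((0:Fin 4),i+1),((1:Fin 4),i+2)) ∈ F) : False := by
  have nladAC : ¬ (ladder p).Adj (1,i) (1,i+2) := by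
    rw [ladder, SimpleGraph.fromRel_adj]
    rintro ⟨-, h⟩
    simp only [Prod.mk.injEq, Fin.reduceEq, false_and, and_false, true_and, false_or, or_false] at h
    rcases h with h | h
    · exact z1 p hp (by linear_combination h)
    · exact z3 p hp (by linear_combination -h)
  have nladBD : ¬ (ladder p).Adj (0,i+1) (3,i+1) := by
    rw [ladder, SimpleGraph.fromRel_adj]
    rintro ⟨-, h⟩
    simp only [Prod.mk.injEq, Fin.reduceEq, false_and, and_false, true_and, false_or, or_false] at h
  apply hfree.false
  refine mkC4 (a := ((1:Fin 4),i)) (b := ((0:Fin 4),i+1)) (c := ((1:Fin 4),i+2)) (d := ((3:Fin 4),i+1))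
    ?_ ?_
    (adj_sup_left ((lad_db p (i+1) (i+2) (Or.inr (Or.inr (by ring)))).symm))
    (adj_sup_left (lad_db p (i+1) i (Or.inl (by ring))))
    (not_adj_sup nladAC (fun h => by rw [SimpleGraph.fromEdgeSet_adj] at h; exact notmemF_bb p F hF i (i+2) h.1))
    (not_adj_sup nladBD (fun h => by rw [SimpleGraph.fromEdgeSet_adj] at h; exact notmemF_d p F hF 0 (i+1) (i+1) h.1))
    ?_ ?_
  · apply adj_sup_right; rw [SimpleGraph.fromEdgeSet_adj]
    refine ⟨by rw [Sym2.eq_swap]; exact h1, ?_⟩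
    intro h; rw [Prod.mk.injEq] at h; exact absurd h.1 (by decide)
  · apply adj_sup_right; rw [SimpleGraph.fromEdgeSet_adj]
    exact ⟨h2, by intro h; rw [Prod.mk.injEq] at h; exact absurd h.1 (by decide)⟩
  · intro h; rw [Prod.mk.injEq] at h
    exact z2 p hp (by linear_combination -h.2)
  · intro h; rw [Prod.mk.injEq] at h; exact absurd h.1 (by decide)

lemma allT (p : ℕ) (hp : 2 ≤ p) (F : Set (Sym2 (Fin 4 × ZMod (4*p))))
    (hF : F ⊆ diagT p ∪ diagB p)
    (hfree : IsEmpty (C4 ↪g (ladder p ⊔ SimpleGraph.fromEdgeSet F))) (i0 : ZMod (4*p))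
    (h0 : s(((0:Fin 4),i0),((1:Fin 4),i0+1)) ∈ F) :
    ∀ i, s(((0:Fin 4),i),((1:Fin 4),i+1)) ∈ F := by
  haveI : NeZero (4*p) := ⟨by omega⟩
  have step : ∀ j : ZMod (4*p), s(((0:Fin 4),j),((1:Fin 4),j+1)) ∈ F →
      s(((0:Fin 4),j+1),((1:Fin 4),j+1+1)) ∈ F := by
    intro j hj
    rcases claim1 p hp F hF hfree (j+1) with h | h
    · exact h
    · exact absurd (by rwa [show j+1+1 = j+2 from by ring] at h) (fun h2 => lemA p hp F hF hfree j hj h2)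
  have key : ∀ k : ℕ, s(((0:Fin 4),i0 + (k:ZMod (4*p))),((1:Fin 4),i0 + (k:ZMod (4*p)) + 1)) ∈ F := by
    intro k
    induction k with
    | zero => simpa using h0
    | succ n ih =>
      have e : i0 + ((n+1 : ℕ) : ZMod (4*p)) = i0 + (n : ZMod (4*p)) + 1 := by push_cast; ring
      rw [e]
      exact step _ ih
  intro i
  have h := key (i - i0).val
  rwa [ZMod.natCast_zmod_val, show i0 + (i - i0) = i from by ring] at h

lemma allB (p : ℕ) (hp : 2 ≤ p) (F : Set (Sym2 (Fin 4 × ZMod (4*p))))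
    (hF : F ⊆ diagT p ∪ diagB p)
    (hfree : IsEmpty (C4 ↪g (ladder p ⊔ SimpleGraph.fromEdgeSet F))) (i0 : ZMod (4*p))
    (h0 : s(((0:Fin 4),i0+1),((1:Fin 4),i0)) ∈ F) :
    ∀ i, s(((0:Fin 4),i+1),((1:Fin 4),i)) ∈ F := by
  haveI : NeZero (4*p) := ⟨by omega⟩
  have step : ∀ j : ZMod (4*p), s(((0:Fin 4),j+1),((1:Fin 4),j)) ∈ F →
      s(((0:Fin 4),j+1+1),((1:Fin 4),j+1)) ∈ F := by
    intro j hj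
    rcases claim1 p hp F hF hfree (j+1) with h | h
    · exact absurd (by rwa [show j+1+1 = j+2 from by ring] at h) (fun h2 => lemB p hp F hF hfree j hj h2)
    · exact h
  have key : ∀ k : ℕ, s(((0:Fin 4),i0 + (k:ZMod (4*p)) + 1),((1:Fin 4),i0 + (k:ZMod (4*p)))) ∈ F := by
    intro k
    induction k with
    | zero => simpa using h0
    | succ n ih =>
      have e : i0 + ((n+1 : ℕ) : ZMod (4*p)) = i0 + (n : ZMod (4*p)) + 1 := by push_cast; ring
      rw [e]
      exact step _ ih
  intro i
  have h := key (i - i0).val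
  rwa [ZMod.natCast_zmod_val, show i0 + (i - i0) = i from by ring] at h

lemma freeT (p : ℕ) (hp : 2 ≤ p) :
    IsEmpty (C4 ↪g (ladder p ⊔ SimpleGraph.fromEdgeSet (diagT p))) := by
  constructor
  intro f
  exact core p hp (f 0) (f 1) (f 2) (f 3)
    (fun h => absurd (f.injective h) (by decide))
    (fun h => absurd (f.injective h) (by decide))
    ((adjT_iff p hp _ _).mp (f.map_rel_iff.mpr C4e01))
    ((adjT_iff p hp _ _).mp (f.map_rel_iff.mpr C4e12))
    ((adjT_iff p hp _ _).mp (f.map_rel_iff.mpr C4e23))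
    ((adjT_iff p hp _ _).mp (f.map_rel_iff.mpr C4e30))
    (fun hPT => C4n02 (f.map_rel_iff.mp ((adjT_iff p hp _ _).mpr hPT)))
    (fun hPT => C4n13 (f.map_rel_iff.mp ((adjT_iff p hp _ _).mpr hPT)))

lemma freeB (p : ℕ) (hp : 2 ≤ p) :
    IsEmpty (C4 ↪g (ladder p ⊔ SimpleGraph.fromEdgeSet (diagB p))) := by
  constructor
  intro f
  exact coreB p hp (f 0) (f 1) (f 2) (f 3)
    (fun h => absurd (f.injective h) (by decide))
    (fun h => absurd (f.injective h) (by decide))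
    ((adjB_iff p hp _ _).mp (f.map_rel_iff.mpr C4e01))
    ((adjB_iff p hp _ _).mp (f.map_rel_iff.mpr C4e12))
    ((adjB_iff p hp _ _).mp (f.map_rel_iff.mpr C4e23))
    ((adjB_iff p hp _ _).mp (f.map_rel_iff.mpr C4e30))
    (fun hPT => C4n02 (f.map_rel_iff.mp ((adjB_iff p hp _ _).mpr hPT)))
    (fun hPT => C4n13 (f.map_rel_iff.mp ((adjB_iff p hp _ _).mpr hPT)))

/-- The fillable non-edges of the cyclic ladder gadget are exactly the
diagonals; there are exactly two sets `F` of fillable non-edges such that the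
ladder plus `F` is `C4`-free: all of `diagT p`, or all of `diagB p`. -/
theorem ladder_two_solutions (p : ℕ) (hp : 2 ≤ p) :
    {F : Set (Sym2 (Fin 4 × ZMod (4 * p))) | F ⊆ diagT p ∪ diagB p ∧
        IsEmpty (C4 ↪g (ladder p ⊔ SimpleGraph.fromEdgeSet F))} =
      {diagT p, diagB p} := by
  ext F
  simp only [Set.mem_setOf_eq, Set.mem_insert_iff, Set.mem_singleton_iff]
  constructor
  · rintro ⟨hsub, hfree⟩
    rcases claim1 p hp F hsub hfree 0 with h0 | h0
    · left
      apply Set.Subset.antisymm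
      · intro e he
        rcases hsub he with h | h
        · exact h
        · obtain ⟨j, rfl⟩ := h
          exfalso
          have hT := allT p hp F hsub hfree 0 h0 (j-1)
          refine lemA p hp F hsub hfree (j-1) hT ?_
          rwa [show j-1+2 = j+1 from by ring, show j-1+1 = j from by ring]
      · intro e he
        obtain ⟨j, rfl⟩ := he
        exact allT p hp F hsub hfree 0 h0 j
    · right
      apply Set.Subset.antisymm
      · intro e he
        rcases hsub he with h | h
        · obtain ⟨j, rfl⟩ := h
          exfalso
          have hB := allB p hp F hsub hfree 0 h0 (j-1)
          refine lemB p hp F hsub hfree (j-1) hB ?_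
          rw [show j-1+1 = j from by ring, show j-1+2 = j+1 from by ring]
          exact he
        · exact h
      · intro e he
        obtain ⟨j, rfl⟩ := he
        exact allB p hp F hsub hfree 0 h0 j
  · rintro (rfl | rfl)
    · exact ⟨Set.subset_union_left, freeT p hp⟩
    · exact ⟨Set.subset_union_right, freeB p hp⟩
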